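/- Monotonicity of UI under range restrictions: for jointly distributed finite random variables (S,S',Y,Y',Z), UI((S,S'); (Y,Y') \ Z) ≥ UI(S; Y \ Z). -/

import Mathlib

open Finset Real

section Defs
variable {α β γ : Type*} [Fintype α] [Fintype β] [Fintype γ]

/-- `p` is a probability distribution on a finite type. -/
def IsDist (p : α → ℝ) : Prop := (∀ a, 0 ≤ p a) ∧ ∑ a, p a = 1

/-- `k` is a channel (stochastic matrix): each row is a distribution. -/
def IsChannel (k : α → β → ℝ) : Prop := ∀ a, IsDist (k a)

/-- Kullback–Leibler divergence (base 2) between distributions on a finite type. -/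
noncomputable def klDiv2 (p q : α → ℝ) : ℝ := ∑ a, p a * Real.logb 2 (p a / q a)

/-- Channel composition: `(chComp lam mu) a c = ∑ b, lam b c * mu a b`. -/
def chComp (lam : β → γ → ℝ) (mu : α → β → ℝ) : α → γ → ℝ :=
  fun a c => ∑ b, lam b c * mu a b

/-- Conditional (weighted) KL divergence `D(k ∥ k' | pi)`. -/
noncomputable def condKL (pi : α → ℝ) (k k' : α → β → ℝ) : ℝ :=
  ∑ a, pi a * klDiv2 (k a) (k' a)

/-- Weighted output deficiency `δ_o^π(μ,κ) = inf_λ D(κ ∥ λ∘μ | π)`. -/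
noncomputable def defOut (pi : α → ℝ) (mu : α → γ → ℝ) (kap : α → β → ℝ) : ℝ :=
  sInf {d | ∃ lam : γ → β → ℝ, IsChannel lam ∧ d = condKL pi kap (chComp lam mu)}

/-- Risk of a fixed strategy `rho` used after observing through channel `nu`. -/
noncomputable def riskWith {S O A : Type*} [Fintype S] [Fintype O] [Fintype A]
    (pi : S → ℝ) (nu : S → O → ℝ) (rho : O → A → ℝ) (l : S → A → ℝ) : ℝ :=
  ∑ s, pi s * ∑ a, chComp rho nu s a * l s a

/-- Optimal Bayes risk `R(π,ν,ℓ)`. -/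
noncomputable def bayesRisk {S O A : Type*} [Fintype S] [Fintype O] [Fintype A]
    (pi : S → ℝ) (nu : S → O → ℝ) (l : S → A → ℝ) : ℝ :=
  sInf {r | ∃ rho : O → A → ℝ, IsChannel rho ∧ r = riskWith pi nu rho l}

/-- Total variation distance between distributions on a finite type. -/
noncomputable def tvDist (p q : α → ℝ) : ℝ := (∑ a, |p a - q a|) / 2

end Defs

section Joint
variable {S Y Z : Type*} [Fintype S] [Fintype Y] [Fintype Z]

noncomputable def margSY (P : S × Y × Z → ℝ) : S × Y → ℝ := fun p => ∑ z, P (p.1, p.2, z)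
noncomputable def margSZ (P : S × Y × Z → ℝ) : S × Z → ℝ := fun p => ∑ y, P (p.1, y, p.2)
noncomputable def margYZ (P : S × Y × Z → ℝ) : Y × Z → ℝ := fun p => ∑ s, P (s, p.1, p.2)
noncomputable def margS (P : S × Y × Z → ℝ) : S → ℝ := fun s => ∑ y, ∑ z, P (s, y, z)
noncomputable def margY (P : S × Y × Z → ℝ) : Y → ℝ := fun y => ∑ s, ∑ z, P (s, y, z)
noncomputable def margZ (P : S × Y × Z → ℝ) : Z → ℝ := fun z => ∑ s, ∑ y, P (s, y, z)

/-- Mutual information `I(S;Y)` (base 2) of the (S,Y)-marginal of `P`. -/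
noncomputable def miSY (P : S × Y × Z → ℝ) : ℝ :=
  ∑ s, ∑ y, margSY P (s, y) * Real.logb 2 (margSY P (s, y) / (margS P s * margY P y))

/-- Mutual information `I(S;Z)` (base 2) of the (S,Z)-marginal of `P`. -/
noncomputable def miSZ (P : S × Y × Z → ℝ) : ℝ :=
  ∑ s, ∑ z, margSZ P (s, z) * Real.logb 2 (margSZ P (s, z) / (margS P s * margZ P z))

/-- Conditional mutual information `I(S;Y|Z)` (base 2) under `P`. -/
noncomputable def condMI (P : S × Y × Z → ℝ) : ℝ :=
  ∑ s, ∑ y, ∑ z,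
    P (s, y, z) * Real.logb 2 (P (s, y, z) * margZ P z / (margSZ P (s, z) * margYZ P (y, z)))

/-- The feasible set `Δ_P`: joint distributions with the same (S,Y)- and (S,Z)-marginals as `P`. -/
def marginalPolytope (P : S × Y × Z → ℝ) : Set (S × Y × Z → ℝ) :=
  {Q | IsDist Q ∧ margSY Q = margSY P ∧ margSZ Q = margSZ P}

/-- Minimum-synergy unique information `UI(S;Y\Z) = inf_{Q ∈ Δ_P} I_Q(S;Y|Z)`. -/
noncomputable def UI (P : S × Y × Z → ℝ) : ℝ :=
  sInf (condMI '' marginalPolytope P)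

noncomputable def condYgivenS (P : S × Y × Z → ℝ) : S → Y → ℝ :=
  fun s y => margSY P (s, y) / margS P s
noncomputable def condZgivenS (P : S × Y × Z → ℝ) : S → Z → ℝ :=
  fun s z => margSZ P (s, z) / margS P s
noncomputable def condSgivenY (P : S × Y × Z → ℝ) : Y → S → ℝ :=
  fun y s => margSY P (s, y) / margY P y
noncomputable def condSgivenZ (P : S × Y × Z → ℝ) : Z → S → ℝ :=
  fun z s => margSZ P (s, z) / margZ P z

/-- Weighted input deficiency `δ_i^π(μ̄,κ̄) = inf_{λ̄} ∑_y π_Y(y) D(κ̄_y ∥ (μ̄∘λ̄)_y)`. -/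
noncomputable def defIn {Y' Z' S' : Type*} [Fintype Y'] [Fintype Z'] [Fintype S']
    (piY : Y' → ℝ) (mub : Z' → S' → ℝ) (kab : Y' → S' → ℝ) : ℝ :=
  sInf {d | ∃ lb : Y' → Z' → ℝ, IsChannel lb ∧
    d = ∑ y, piY y * klDiv2 (kab y) (chComp mub lb y)}

end Joint

-- sum reordering lemmas
lemma sum3 {A B C : Type*} [Fintype A] [Fintype B] [Fintype C] (f : A → B → C → ℝ) :
    ∑ a, ∑ b, ∑ c, f a b c = ∑ c, ∑ a, ∑ b, f a b c := by
  have h1 : ∀ a, ∑ b, ∑ c, f a b c = ∑ c, ∑ b, f a b c := fun a => Finset.sum_comm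
  simp_rw [h1]
  exact Finset.sum_comm

lemma sum5 {A B C D E : Type*} [Fintype A] [Fintype B] [Fintype C] [Fintype D] [Fintype E]
    (f : A → B → C → D → E → ℝ) :
    ∑ a, ∑ b, ∑ c, ∑ d, ∑ e, f a b c d e = ∑ a, ∑ c, ∑ e, ∑ b, ∑ d, f a b c d e := by
  refine Finset.sum_congr rfl fun a _ => ?_
  rw [Finset.sum_comm]
  exact Finset.sum_congr rfl fun c _ => sum3 _

section Marg
variable {S Y Z : Type*} [Fintype S] [Fintype Y] [Fintype Z]
variable {Q : S × Y × Z → ℝ}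
variable (hQ : ∀ p, 0 ≤ Q p)
include hQ

lemma margSZ_nonneg (s : S) (z : Z) : 0 ≤ margSZ Q (s, z) :=
  Finset.sum_nonneg fun _ _ => hQ _
lemma margYZ_nonneg (y : Y) (z : Z) : 0 ≤ margYZ Q (y, z) :=
  Finset.sum_nonneg fun _ _ => hQ _
lemma margZ_nonneg (z : Z) : 0 ≤ margZ Q z :=
  Finset.sum_nonneg fun _ _ => Finset.sum_nonneg fun _ _ => hQ _
lemma le_margSZ (s : S) (y : Y) (z : Z) : Q (s, y, z) ≤ margSZ Q (s, z) :=
  Finset.single_le_sum (fun y _ => hQ (s, y, z)) (Finset.mem_univ y)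
lemma le_margYZ (s : S) (y : Y) (z : Z) : Q (s, y, z) ≤ margYZ Q (y, z) :=
  Finset.single_le_sum (fun s _ => hQ (s, y, z)) (Finset.mem_univ s)
lemma margSZ_le_margZ (s : S) (z : Z) : margSZ Q (s, z) ≤ margZ Q z :=
  Finset.single_le_sum (fun s _ => margSZ_nonneg hQ s z) (Finset.mem_univ s)

omit hQ in
lemma sum_margSZ (z : Z) : ∑ s, margSZ Q (s, z) = margZ Q z := rfl
omit hQ in
lemma sum_margYZ (z : Z) : ∑ y, margYZ Q (y, z) = margZ Q z := Finset.sum_comm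

end Marg
lemma log_sum_ineq {ι : Type*} [Fintype ι] (a b : ι → ℝ)
    (ha : ∀ i, 0 ≤ a i) (hb : ∀ i, 0 ≤ b i) (hab : ∀ i, b i = 0 → a i = 0) :
    (∑ i, a i) * Real.logb 2 ((∑ i, a i) / (∑ i, b i)) ≤ ∑ i, a i * Real.logb 2 (a i / b i) := by
  by_cases hA : ∑ i, a i = 0
  · have h0 : ∀ i ∈ Finset.univ, a i = 0 :=
      (Finset.sum_eq_zero_iff_of_nonneg (fun i _ => ha i)).mp hA
    rw [hA, zero_mul]
    apply Finset.sum_nonneg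
    intro i hi; rw [h0 i hi, zero_mul]
  · have hApos : 0 < ∑ i, a i :=
      lt_of_le_of_ne (Finset.sum_nonneg fun i _ => ha i) (Ne.symm hA)
    obtain ⟨i0, hi0u, hi0⟩ : ∃ i ∈ Finset.univ, a i ≠ 0 := by
      by_contra h; push_neg at h; exact hA (Finset.sum_eq_zero fun i hi => h i hi)
    have hbi0 : 0 < b i0 := lt_of_le_of_ne (hb i0) fun h => hi0 (hab i0 h.symm)
    have hBpos : 0 < ∑ i, b i :=
      lt_of_lt_of_le hbi0 (Finset.single_le_sum (fun i _ => hb i) (Finset.mem_univ i0))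
    set A := ∑ i, a i with hAdef
    set B := ∑ i, b i with hBdef
    -- reduce to natural log
    have hlog2 : (0:ℝ) < Real.log 2 := Real.log_pos (by norm_num)
    simp only [Real.logb, ← mul_div_assoc]
    rw [← Finset.sum_div]
    apply div_le_div_of_nonneg_right ?_ hlog2.le
    -- key pointwise bound
    have key : ∀ i, a i - b i * (A / B) ≤ a i * (Real.log (a i / b i) - Real.log (A / B)) := by
      intro i
      rcases eq_or_lt_of_le (ha i) with h0 | hpos
      · rw [← h0]; simp only [zero_mul, zero_sub, sub_zero]
        have : 0 ≤ b i * (A / B) := mul_nonneg (hb i) (div_nonneg hApos.le hBpos.le)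
        linarith
      · have hbpos : 0 < b i := lt_of_le_of_ne (hb i) fun h => (ne_of_gt hpos) (hab i h.symm)
        have ht : 0 < (a i / b i) / (A / B) := by positivity
        have h1 : 1 - ((a i / b i) / (A / B))⁻¹ ≤ Real.log ((a i / b i) / (A / B)) :=
          Real.one_sub_inv_le_log_of_pos ht
        rw [Real.log_div (by positivity) (by positivity)] at h1
        have h2 : a i * (1 - ((a i / b i) / (A / B))⁻¹) ≤
            a i * (Real.log (a i / b i) - Real.log (A / B)) :=
          mul_le_mul_of_nonneg_left h1 (ha i)
        refine le_trans (le_of_eq ?_) h2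
        field_simp
    calc A * Real.log (A / B) = ∑ i, a i * Real.log (A / B) := by rw [← Finset.sum_mul]
      _ ≤ ∑ i, a i * Real.log (a i / b i) := by
          have h := Finset.sum_le_sum (fun i (_ : i ∈ Finset.univ) => key i)
          simp only [mul_sub] at h
          have e1 : (∑ i, a i) = A := rfl
          have e2 : (∑ i, b i) = B := rfl
          rw [Finset.sum_sub_distrib, Finset.sum_sub_distrib, ← Finset.sum_mul,
            ← Finset.sum_mul, e1, e2] at h
          have hBA : B * (A / B) = A := by field_simp
          rw [hBA] at h
          rw [← Finset.sum_mul, e1]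
          linarith

lemma condMI_nonneg {S Y Z : Type*} [Fintype S] [Fintype Y] [Fintype Z]
    (Q : S × Y × Z → ℝ) (hQ : IsDist Q) : 0 ≤ condMI Q := by
  obtain ⟨hpos, hsum⟩ := hQ
  set b : S × Y × Z → ℝ :=
    fun p => margSZ Q (p.1, p.2.2) * margYZ Q (p.2.1, p.2.2) / margZ Q p.2.2 with hbdef
  have hbn : ∀ p, 0 ≤ b p := fun p => div_nonneg
    (mul_nonneg (margSZ_nonneg hpos _ _) (margYZ_nonneg hpos _ _)) (margZ_nonneg hpos _)
  have hab : ∀ p, b p = 0 → Q p = 0 := by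
    intro p h0
    by_contra hne
    obtain ⟨s, y, z⟩ := p
    have hq : 0 < Q (s, y, z) := lt_of_le_of_ne (hpos _) (Ne.symm hne)
    have h1 : 0 < margSZ Q (s, z) := lt_of_lt_of_le hq (le_margSZ hpos s y z)
    have h2 : 0 < margYZ Q (y, z) := lt_of_lt_of_le hq (le_margYZ hpos s y z)
    have h3 : 0 < margZ Q z := lt_of_lt_of_le h1 (margSZ_le_margZ hpos s z)
    have hb : 0 < b (s, y, z) := by simp only [hbdef]; positivity
    exact absurd h0 (ne_of_gt hb)
  have hkey := log_sum_ineq Q b hpos hbn hab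
  have e1 : condMI Q = ∑ p : S × Y × Z, Q p * Real.logb 2 (Q p / b p) := by
    simp only [condMI, Fintype.sum_prod_type, hbdef, div_div_eq_mul_div]
  rw [e1]
  refine le_trans ?_ hkey
  rw [hsum, one_mul]
  -- bound the sum of b
  have hB1 : ∑ p : S × Y × Z, b p ≤ 1 := by
    have e2 : ∑ p : S × Y × Z, b p
        = ∑ z, margZ Q z * margZ Q z / margZ Q z := by
      simp only [hbdef, Fintype.sum_prod_type]
      rw [sum3]
      refine Finset.sum_congr rfl fun z _ => ?_
      simp only [← Finset.sum_div]
      rw [← Finset.sum_mul_sum, sum_margSZ, sum_margYZ]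
    rw [e2]
    have e3 : ∑ z, margZ Q z = 1 := by
      rw [← hsum]
      simp only [Fintype.sum_prod_type, margZ]
      exact (sum3 fun s y z => Q (s, y, z)).symm
    calc ∑ z, margZ Q z * margZ Q z / margZ Q z ≤ ∑ z, margZ Q z := by
          refine Finset.sum_le_sum fun z _ => ?_
          rcases eq_or_lt_of_le (margZ_nonneg hpos z) with h | h
          · rw [← h]; simp
          · rw [mul_div_assoc, div_self (ne_of_gt h), mul_one]
      _ = 1 := e3
  have hBpos : 0 < ∑ p : S × Y × Z, b p := by
    obtain ⟨p0, _, hp0⟩ : ∃ p ∈ Finset.univ, Q p ≠ 0 := by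
      by_contra h; push_neg at h
      rw [Finset.sum_eq_zero h] at hsum; norm_num at hsum
    have : 0 < b p0 := lt_of_le_of_ne (hbn p0) fun h => hp0 (hab p0 h.symm)
    exact lt_of_lt_of_le this (Finset.single_le_sum (fun p _ => hbn p) (Finset.mem_univ p0))
  have h1B : 1 ≤ 1 / ∑ p : S × Y × Z, b p :=
    (le_div_iff₀ hBpos).mpr (by linarith)
  exact Real.logb_nonneg (by norm_num) h1B

lemma condMI_restrict_le {S S' Y Y' Z : Type*}
    [Fintype S] [Fintype S'] [Fintype Y] [Fintype Y'] [Fintype Z]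
    (Q : (S × S') × (Y × Y') × Z → ℝ) (hQ : ∀ p, 0 ≤ Q p) :
    condMI (fun p : S × Y × Z => ∑ s', ∑ y', Q ((p.1, s'), (p.2.1, y'), p.2.2)) ≤ condMI Q := by
  set R : S × Y × Z → ℝ := fun p => ∑ s', ∑ y', Q ((p.1, s'), (p.2.1, y'), p.2.2) with hR
  have f1 : margZ R = margZ Q := by
    funext z
    show ∑ s, ∑ y, R (s, y, z) = ∑ A : S × S', ∑ B : Y × Y', Q (A, B, z)
    simp only [hR, Fintype.sum_prod_type]
    exact Finset.sum_congr rfl fun s _ => Finset.sum_comm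
  have f2 : ∀ s z, margSZ R (s, z) = ∑ s', margSZ Q ((s, s'), z) := by
    intro s z
    show ∑ y, R (s, y, z) = ∑ s', ∑ B : Y × Y', Q ((s, s'), B, z)
    simp only [hR, Fintype.sum_prod_type]
    exact Finset.sum_comm
  have f3 : ∀ y z, margYZ R (y, z) = ∑ y', margYZ Q ((y, y'), z) := by
    intro y z
    show ∑ s, R (s, y, z) = ∑ y', ∑ A : S × S', Q (A, (y, y'), z)
    simp only [hR, Fintype.sum_prod_type]
    exact sum3 _
  have main : ∀ s y z,
      R (s, y, z) * Real.logb 2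
          (R (s, y, z) * margZ Q z / (margSZ R (s, z) * margYZ R (y, z)))
      ≤ ∑ s', ∑ y', Q ((s, s'), (y, y'), z) *
          Real.logb 2 (Q ((s, s'), (y, y'), z) * margZ Q z /
            (margSZ Q ((s, s'), z) * margYZ Q ((y, y'), z))) := by
    intro s y z
    set a : S' × Y' → ℝ := fun q => Q ((s, q.1), (y, q.2), z) with hadef
    set bb : S' × Y' → ℝ :=
      fun q => margSZ Q ((s, q.1), z) * margYZ Q ((y, q.2), z) / margZ Q z with hbdef
    have ha : ∀ q, 0 ≤ a q := fun q => hQ _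
    have hb : ∀ q, 0 ≤ bb q := fun q => div_nonneg
      (mul_nonneg (margSZ_nonneg hQ _ _) (margYZ_nonneg hQ _ _)) (margZ_nonneg hQ _)
    have hab : ∀ q, bb q = 0 → a q = 0 := by
      intro q h0
      by_contra hne
      have hq : 0 < a q := lt_of_le_of_ne (ha q) (Ne.symm hne)
      have h1 : 0 < margSZ Q ((s, q.1), z) := lt_of_lt_of_le hq (le_margSZ hQ _ _ _)
      have h2 : 0 < margYZ Q ((y, q.2), z) := lt_of_lt_of_le hq (le_margYZ hQ _ _ _)
      have h3 : 0 < margZ Q z := lt_of_lt_of_le h1 (margSZ_le_margZ hQ _ _)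
      have hbq : 0 < bb q := by simp only [hbdef]; positivity
      exact absurd h0 (ne_of_gt hbq)
    have hkey := log_sum_ineq a bb ha hb hab
    have ea : ∑ q : S' × Y', a q = R (s, y, z) := by
      simp only [hadef, hR, Fintype.sum_prod_type]
    have eb : ∑ q : S' × Y', bb q = margSZ R (s, z) * margYZ R (y, z) / margZ Q z := by
      rw [f2 s z, f3 y z]
      simp only [hbdef, Fintype.sum_prod_type, ← Finset.sum_div]
      rw [← Finset.sum_mul_sum]
    rw [ea, eb] at hkey
    simp only [div_div_eq_mul_div] at hkey
    simp only [hadef, hbdef, Fintype.sum_prod_type, div_div_eq_mul_div] at hkey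
    exact hkey
  have eQ : condMI Q = ∑ s, ∑ y, ∑ z, ∑ s', ∑ y',
      Q ((s, s'), (y, y'), z) * Real.logb 2 (Q ((s, s'), (y, y'), z) * margZ Q z /
        (margSZ Q ((s, s'), z) * margYZ Q ((y, y'), z))) := by
    simp only [condMI, Fintype.sum_prod_type]
    exact sum5 _
  rw [eQ]
  show ∑ s, ∑ y, ∑ z, R (s, y, z) * Real.logb 2
      (R (s, y, z) * margZ R z / (margSZ R (s, z) * margYZ R (y, z))) ≤ _
  rw [f1]
  exact Finset.sum_le_sum fun s _ => Finset.sum_le_sum fun y _ =>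
    Finset.sum_le_sum fun z _ => main s y z

section Restrict
variable {S S' Y Y' Z : Type*} [Fintype S] [Fintype S'] [Fintype Y] [Fintype Y'] [Fintype Z]
variable (Q : (S × S') × (Y × Y') × Z → ℝ)

lemma margSY_restrict (s : S) (y : Y) :
    margSY (fun p : S × Y × Z => ∑ s', ∑ y', Q ((p.1, s'), (p.2.1, y'), p.2.2)) (s, y)
      = ∑ s', ∑ y', margSY Q ((s, s'), (y, y')) := by
  show ∑ z, ∑ s', ∑ y', Q ((s, s'), (y, y'), z) = ∑ s', ∑ y', ∑ z, Q ((s, s'), (y, y'), z)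
  exact (sum3 _).symm

lemma margSZ_restrict (s : S) (z : Z) :
    margSZ (fun p : S × Y × Z => ∑ s', ∑ y', Q ((p.1, s'), (p.2.1, y'), p.2.2)) (s, z)
      = ∑ s', margSZ Q ((s, s'), z) := by
  show ∑ y, ∑ s', ∑ y', Q ((s, s'), (y, y'), z) = ∑ s', ∑ B : Y × Y', Q ((s, s'), B, z)
  simp only [Fintype.sum_prod_type]
  exact Finset.sum_comm

lemma sum_restrict :
    ∑ p : S × Y × Z, ∑ s', ∑ y', Q ((p.1, s'), (p.2.1, y'), p.2.2)
      = ∑ p : (S × S') × (Y × Y') × Z, Q p := by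
  simp only [Fintype.sum_prod_type]
  exact (sum5 _).symm

end Restrict


/-- monotonicity of `UI` under range restrictions:
`UI((S,S');(Y,Y')\Z) ≥ UI(S;Y\Z)`. -/
theorem UI_mono_range_restriction
    {S S' Y Y' Z : Type*} [Fintype S] [Fintype S'] [Fintype Y] [Fintype Y'] [Fintype Z]
    (P : (S × S') × (Y × Y') × Z → ℝ) (hP : IsDist P) :
    UI (fun p : S × Y × Z => ∑ s' : S', ∑ y' : Y', P ((p.1, s'), (p.2.1, y'), p.2.2)) ≤
      UI P := by

  have hne : (condMI '' marginalPolytope P).Nonempty := ⟨condMI P, P, ⟨hP, rfl, rfl⟩, rfl⟩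
  refine le_csInf hne ?_
  rintro d ⟨Q, ⟨hQd, hSY, hSZ⟩, rfl⟩
  have hmem : (fun p : S × Y × Z => ∑ s' : S', ∑ y' : Y', Q ((p.1, s'), (p.2.1, y'), p.2.2)) ∈
      marginalPolytope
        (fun p : S × Y × Z => ∑ s' : S', ∑ y' : Y', P ((p.1, s'), (p.2.1, y'), p.2.2)) := by
    refine ⟨⟨fun p => Finset.sum_nonneg fun _ _ => Finset.sum_nonneg fun _ _ => hQd.1 _, ?_⟩,
      ?_, ?_⟩
    · rw [sum_restrict Q, hQd.2]
    · funext p; obtain ⟨s, y⟩ := p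
      show margSY _ (s, y) = margSY _ (s, y)
      rw [margSY_restrict Q s y, margSY_restrict P s y, hSY]
    · funext p; obtain ⟨s, z⟩ := p
      show margSZ _ (s, z) = margSZ _ (s, z)
      rw [margSZ_restrict Q s z, margSZ_restrict P s z, hSZ]
  have hbdd : BddBelow (condMI ''
      marginalPolytope
        (fun p : S × Y × Z => ∑ s' : S', ∑ y' : Y', P ((p.1, s'), (p.2.1, y'), p.2.2))) := by
    refine ⟨0, ?_⟩
    rintro d ⟨R, hR, rfl⟩
    exact condMI_nonneg R hR.1
  exact le_trans (csInf_le hbdd ⟨_, hmem, rfl⟩) (condMI_restrict_le Q hQd.1)
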